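/- Zero curvature (Lax) formulation of the Sine-Gordon equation. Let u : ℝ×ℝ → ℝ be smooth and let λ be a nonzero complex number. Define the 2×2 complex matrix functions M = [[−iλ, −u_x/2], [u_x/2, iλ]] and N = (i/(4λ)) · [[cos u, sin u], [sin u, −cos u]], where u_x = ∂_x u. Then the zero curvature equation ∂_t M − ∂_x N + MN − NM = 0 holds at a point if and only if ∂_t∂_x u = sin u holds at that point. -/

import Mathlib

set_option maxHeartbeats 1000000 in


/-- zero curvature (Lax) formulation of the Sine-Gordon equation.
With `M = [[−iλ, −u_x/2],[u_x/2, iλ]]` and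
`N = (i/(4λ))·[[cos u, sin u],[sin u, −cos u]]`, the zero curvature equation
`∂_t M − ∂_x N + MN − NM = 0` at a point is equivalent to `∂_t∂_x u = sin u` there. -/
theorem sineGordon_zero_curvature (u : ℝ → ℝ → ℝ)
    (hu : ContDiff ℝ (⊤ : ℕ∞) fun p : ℝ × ℝ => u p.1 p.2)
    (lam : ℂ) (hlam : lam ≠ 0)
    (M N : ℝ → ℝ → Matrix (Fin 2) (Fin 2) ℂ)
    (hM : ∀ x t, M x t =
      !![-(Complex.I * lam), -((deriv (fun x' => u x' t) x : ℝ) : ℂ) / 2;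
         ((deriv (fun x' => u x' t) x : ℝ) : ℂ) / 2, Complex.I * lam])
    (hN : ∀ x t, N x t = (Complex.I / (4 * lam)) •
      !![((Real.cos (u x t) : ℝ) : ℂ), ((Real.sin (u x t) : ℝ) : ℂ);
         ((Real.sin (u x t) : ℝ) : ℂ), -((Real.cos (u x t) : ℝ) : ℂ)])
    (x t : ℝ) :
    ((Matrix.of fun i j => deriv (fun t' => M x t' i j) t)
        - (Matrix.of fun i j => deriv (fun x' => N x' t i j) x)
        + M x t * N x t - N x t * M x t = 0)
      ↔ deriv (fun t' => deriv (fun x' => u x' t') x) t = Real.sin (u x t) := by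
  set U : ℝ × ℝ → ℝ := fun p => u p.1 p.2 with hUdef
  have hUd : Differentiable ℝ U := hu.differentiable (by simp)
  set w : ℝ → ℝ → ℝ := fun x t => fderiv ℝ U (x, t) (1, 0) with hwdef
  have hx : ∀ x t, HasDerivAt (fun x' => u x' t) (w x t) x := by
    intro x t
    have h2 : HasDerivAt (fun x' : ℝ => ((x' : ℝ), t)) ((1:ℝ), (0:ℝ)) x :=
      (hasDerivAt_id x).prodMk (hasDerivAt_const x t)
    exact (hUd (x, t)).hasFDerivAt.comp_hasDerivAt x h2
  have hderivx : ∀ x t, deriv (fun x' => u x' t) x = w x t := fun x t => (hx x t).deriv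
  have hF : ContDiff ℝ (⊤ : ℕ∞) (fun p : ℝ × ℝ => fderiv ℝ U p (1, 0)) :=
    (hu.fderiv_right (by exact_mod_cast le_top)).clm_apply contDiff_const
  have hwt : DifferentiableAt ℝ (fun t' => w x t') t := by
    exact ((hF.differentiable (by simp)) (x, t)).comp t
      ((differentiableAt_const x).prodMk differentiableAt_id)
  set wt : ℝ := deriv (fun t' => w x t') t with hwtdef
  have ht : HasDerivAt (fun t' => w x t') wt t := hwt.hasDerivAt
  -- replace goal RHS
  have hrw : (fun t' => deriv (fun x' => u x' t') x) = fun t' => w x t' := by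
    funext t'; exact hderivx x t'
  rw [hrw]
  -- derivatives of cos/sin of u in x
  have hcos : HasDerivAt (fun x' => Real.cos (u x' t))
      (-Real.sin (u x t) * w x t) x := (hx x t).cos
  have hsin : HasDerivAt (fun x' => Real.sin (u x' t))
      (Real.cos (u x t) * w x t) x := (hx x t).sin
  set c : ℂ := Complex.I / (4 * lam) with hc
  -- compute M-entry derivatives in t
  have dM00 : deriv (fun t' => M x t' 0 0) t = 0 := by
    simp only [hM]; simp
  have dM11 : deriv (fun t' => M x t' 1 1) t = 0 := by
    simp only [hM]; simp
  have dM01 : deriv (fun t' => M x t' 0 1) t = -(wt : ℂ) / 2 := by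
    have : (fun t' => M x t' 0 1) = fun t' => -((w x t' : ℝ) : ℂ) / 2 := by
      funext t'; simp [hM, hderivx]
    rw [this]
    have : HasDerivAt (fun t' => -((w x t' : ℝ) : ℂ) / 2) (-(wt:ℂ)/2) t :=
      (ht.ofReal_comp.neg).div_const 2
    exact this.deriv
  have dM10 : deriv (fun t' => M x t' 1 0) t = (wt : ℂ) / 2 := by
    have : (fun t' => M x t' 1 0) = fun t' => ((w x t' : ℝ) : ℂ) / 2 := by
      funext t'; simp [hM, hderivx]
    rw [this]
    exact (ht.ofReal_comp.div_const 2).deriv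
  -- compute N-entry derivatives in x
  have dN00 : deriv (fun x' => N x' t 0 0) x = c * ((-Real.sin (u x t) * w x t : ℝ) : ℂ) := by
    have : (fun x' => N x' t 0 0) = fun x' => c * ((Real.cos (u x' t) : ℝ) : ℂ) := by
      funext x'; simp [hN, hc]
    rw [this]
    exact (hcos.ofReal_comp.const_mul c).deriv
  have dN11 : deriv (fun x' => N x' t 1 1) x = -(c * ((-Real.sin (u x t) * w x t : ℝ) : ℂ)) := by
    have : (fun x' => N x' t 1 1) = fun x' => -(c * ((Real.cos (u x' t) : ℝ) : ℂ)) := by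
      funext x'; simp [hN, hc, mul_neg]
    rw [this]
    exact ((hcos.ofReal_comp.const_mul c).neg).deriv
  have dN01 : deriv (fun x' => N x' t 0 1) x = c * ((Real.cos (u x t) * w x t : ℝ) : ℂ) := by
    have : (fun x' => N x' t 0 1) = fun x' => c * ((Real.sin (u x' t) : ℝ) : ℂ) := by
      funext x'; simp [hN, hc]
    rw [this]
    exact (hsin.ofReal_comp.const_mul c).deriv
  have dN10 : deriv (fun x' => N x' t 1 0) x = c * ((Real.cos (u x t) * w x t : ℝ) : ℂ) := by
    have : (fun x' => N x' t 1 0) = fun x' => c * ((Real.sin (u x' t) : ℝ) : ℂ) := by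
      funext x'; simp [hN, hc]
    rw [this]
    exact (hsin.ofReal_comp.const_mul c).deriv
  have key10 : (((Matrix.of fun i j => deriv (fun t' => M x t' i j) t)
        - (Matrix.of fun i j => deriv (fun x' => N x' t i j) x)
        + M x t * N x t - N x t * M x t) : Matrix (Fin 2) (Fin 2) ℂ) 1 0
      = ((wt : ℂ) - (Real.sin (u x t) : ℂ)) / 2 := by
    simp only [Matrix.sub_apply, Matrix.add_apply, Matrix.of_apply]
    rw [dM10, dN10, hM, hN]
    simp only [Matrix.mul_apply, Fin.sum_univ_two, Matrix.smul_apply, smul_eq_mul,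
      Matrix.cons_val', Matrix.cons_val_zero, Matrix.cons_val_one, Matrix.head_cons,
      Matrix.empty_val', Matrix.cons_val_fin_one, Matrix.head_fin_const, hderivx, Matrix.of_apply]
    rw [hc]
    push_cast
    have hI := Complex.I_sq
    field_simp
    ring_nf
    simp only [hI]
    field_simp
    ring
  have key00 : (((Matrix.of fun i j => deriv (fun t' => M x t' i j) t)
        - (Matrix.of fun i j => deriv (fun x' => N x' t i j) x)
        + M x t * N x t - N x t * M x t) : Matrix (Fin 2) (Fin 2) ℂ) 0 0
      = 0 := by
    simp only [Matrix.sub_apply, Matrix.add_apply, Matrix.of_apply]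
    rw [dM00, dN00, hM, hN]
    simp only [Matrix.mul_apply, Fin.sum_univ_two, Matrix.smul_apply, smul_eq_mul,
      Matrix.cons_val', Matrix.cons_val_zero, Matrix.cons_val_one, Matrix.head_cons,
      Matrix.empty_val', Matrix.cons_val_fin_one, Matrix.head_fin_const, hderivx, Matrix.of_apply]
    rw [hc]
    push_cast
    have hI := Complex.I_sq
    field_simp
    ring_nf
  have key01 : (((Matrix.of fun i j => deriv (fun t' => M x t' i j) t)
        - (Matrix.of fun i j => deriv (fun x' => N x' t i j) x)
        + M x t * N x t - N x t * M x t) : Matrix (Fin 2) (Fin 2) ℂ) 0 1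
      = -(((wt : ℂ) - (Real.sin (u x t) : ℂ)) / 2) := by
    simp only [Matrix.sub_apply, Matrix.add_apply, Matrix.of_apply]
    rw [dM01, dN01, hM, hN]
    simp only [Matrix.mul_apply, Fin.sum_univ_two, Matrix.smul_apply, smul_eq_mul,
      Matrix.cons_val', Matrix.cons_val_zero, Matrix.cons_val_one, Matrix.head_cons,
      Matrix.empty_val', Matrix.cons_val_fin_one, Matrix.head_fin_const, hderivx, Matrix.of_apply]
    rw [hc]
    push_cast
    have hI := Complex.I_sq
    field_simp
    ring_nf
    simp only [hI]
    field_simp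
    ring
  have key11 : (((Matrix.of fun i j => deriv (fun t' => M x t' i j) t)
        - (Matrix.of fun i j => deriv (fun x' => N x' t i j) x)
        + M x t * N x t - N x t * M x t) : Matrix (Fin 2) (Fin 2) ℂ) 1 1
      = 0 := by
    simp only [Matrix.sub_apply, Matrix.add_apply, Matrix.of_apply]
    rw [dM11, dN11, hM, hN]
    simp only [Matrix.mul_apply, Fin.sum_univ_two, Matrix.smul_apply, smul_eq_mul,
      Matrix.cons_val', Matrix.cons_val_zero, Matrix.cons_val_one, Matrix.head_cons,
      Matrix.empty_val', Matrix.cons_val_fin_one, Matrix.head_fin_const, hderivx, Matrix.of_apply]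
    rw [hc]
    push_cast
    have hI := Complex.I_sq
    field_simp
    ring_nf
  rw [← Matrix.ext_iff]
  constructor
  · intro h
    have h10 := h 1 0
    rw [key10] at h10
    simp only [Matrix.zero_apply] at h10
    have h2 : (wt : ℂ) = ((Real.sin (u x t) : ℝ) : ℂ) := by
      field_simp at h10
      rw [Complex.ofReal_sin] at h10 ⊢
      linear_combination h10
    exact_mod_cast h2
  · intro h i j
    have hwts : (wt : ℂ) = ((Real.sin (u x t) : ℝ) : ℂ) := by exact_mod_cast h
    simp only [Matrix.zero_apply]
    fin_cases i <;> fin_cases j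
    · exact key00
    · exact key01.trans (by rw [hwts]; ring)
    · exact key10.trans (by rw [hwts]; ring)
    · exact key11
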